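/- Let S be a real symmetric n×n matrix with eigenvalues {e_i}, and let 0 < λ ≤ Λ. Then there exists a real symmetric matrix A with λ/2 ≤ A ≤ 2Λ (in the sense that all eigenvalues of A lie in [λ/2, 2Λ]) such that trace(A·S) = 2Λ·Σ_{e_i<0} e_i + (λ/2)·Σ_{e_i>0} e_i. -/

import Mathlib

open Matrix

theorem exists_extremal_matrix (n : ℕ) (S : Matrix (Fin n) (Fin n) ℝ) (hS : S.IsHermitian)
    (la La : ℝ) (hla : 0 < la) (hlaLa : la ≤ La) :
    ∃ A : Matrix (Fin n) (Fin n) ℝ, A.IsHermitian ∧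
      (A - (la / 2) • (1 : Matrix (Fin n) (Fin n) ℝ)).PosSemidef ∧
      ((2 * La) • (1 : Matrix (Fin n) (Fin n) ℝ) - A).PosSemidef ∧
      (A * S).trace =
        2 * La * (∑ i, if hS.eigenvalues i < 0 then hS.eigenvalues i else 0) +
        (la / 2) * (∑ i, if 0 < hS.eigenvalues i then hS.eigenvalues i else 0) := by
  set U : Matrix (Fin n) (Fin n) ℝ := (hS.eigenvectorUnitary : Matrix (Fin n) (Fin n) ℝ) with hU
  have hUU : U * star U = 1 := (Matrix.mem_unitaryGroup_iff).mp hS.eigenvectorUnitary.2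
  have hU'U : star U * U = 1 := (Matrix.mem_unitaryGroup_iff').mp hS.eigenvectorUnitary.2
  set c : Fin n → ℝ := fun i => if hS.eigenvalues i < 0 then 2 * La else la / 2 with hc
  have key : ∀ r : ℝ, r • (1 : Matrix (Fin n) (Fin n) ℝ) = U * (r • 1) * star U := by
    intro r
    rw [Matrix.mul_smul, mul_one, Matrix.smul_mul, hUU]
  have hsub : ∀ d : Fin n → ℝ, ∀ r : ℝ,
      U * diagonal d * star U - r • 1 = U * diagonal (fun i => d i - r) * star U := by
    intro d r
    rw [key r, ← Matrix.sub_mul, ← Matrix.mul_sub]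
    congr 1
    congr 1
    ext i j
    by_cases h : i = j <;> simp [Matrix.diagonal, Matrix.one_apply, h]
  refine ⟨U * diagonal c * star U, ?_, ?_, ?_, ?_⟩
  · have : (U * diagonal c * star U)ᴴ = U * diagonal c * star U := by
      rw [Matrix.conjTranspose_mul, Matrix.conjTranspose_mul, Matrix.diagonal_conjTranspose]
      simp [mul_assoc, Matrix.star_eq_conjTranspose]
    exact this
  · rw [hsub]
    refine (Matrix.posSemidef_diagonal_iff.mpr fun i => ?_).mul_mul_conjTranspose_same U
    by_cases h : hS.eigenvalues i < 0 <;> simp only [hc, h, if_true, if_false, sub_nonneg] <;> linarith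
  · have : (2 * La) • (1 : Matrix (Fin n) (Fin n) ℝ) - U * diagonal c * star U
        = U * diagonal (fun i => 2 * La - c i) * star U := by
      rw [← neg_sub, hsub, ← Matrix.neg_mul, ← Matrix.mul_neg]
      congr 1
      congr 1
      ext i j
      by_cases h : i = j <;> simp [Matrix.diagonal, h]
    rw [this]
    refine (Matrix.posSemidef_diagonal_iff.mpr fun i => ?_).mul_mul_conjTranspose_same U
    by_cases h : hS.eigenvalues i < 0 <;> simp only [hc, h, if_true, if_false, sub_nonneg] <;> linarith
  · have hdiag : star U * S * U = diagonal hS.eigenvalues := by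
      have := hS.conjStarAlgAut_star_eigenvectorUnitary
      simp only [Unitary.conjStarAlgAut_apply, Unitary.coe_star, star_star, RCLike.ofReal_real_eq_id, Function.id_comp] at this
      convert this using 2
    have h1 : (U * diagonal c * star U * S).trace
        = (diagonal c * (star U * S * U)).trace := by
      rw [Matrix.mul_assoc (U * diagonal c), Matrix.trace_mul_comm,
        ← Matrix.mul_assoc, ← Matrix.mul_assoc, Matrix.trace_mul_comm (star U * S * U) (diagonal c), Matrix.mul_assoc]
      simp only [Matrix.mul_assoc]
    rw [h1, hdiag, Matrix.diagonal_mul_diagonal, Matrix.trace_diagonal,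
      Finset.mul_sum, Finset.mul_sum, ← Finset.sum_add_distrib]
    refine Finset.sum_congr rfl fun i _ => ?_
    rcases lt_trichotomy (hS.eigenvalues i) 0 with h | h | h
    · simp [hc, h, not_lt.mpr h.le]
    · simp [hc, h]
    · simp [hc, not_lt.mpr h.le, h]
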